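/- arXiv:2202.05458 — 2 statements merged into one kernel-verified Lean document; each statement's English description precedes it below -/
import Mathlib

section
/- If k : X × X → ℝ is a positive semidefinite kernel, then the pointwise exponential exp ∘ k, defined by (x, y) ↦ exp(k(x, y)), is also a positive semidefinite kernel. -/
def IsPSDKernel {X : Type*} (k : X → X → ℝ) : Prop :=
  (∀ x y, k x y = k y x) ∧
  ∀ (n : ℕ) (x : Fin n → X) (c : Fin n → ℝ),
    0 ≤ ∑ i, ∑ j, c i * c j * k (x i) (x j)

/-- Schur product theorem at the quadratic-form level. -/
lemma schur_quadform {n : ℕ} (M N : Matrix (Fin n) (Fin n) ℝ)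
    (hM : M.PosSemidef) (hN : ∀ c : Fin n → ℝ, 0 ≤ ∑ i, ∑ j, c i * c j * N i j)
    (c : Fin n → ℝ) : 0 ≤ ∑ i, ∑ j, c i * c j * (M i j * N i j) := by
  obtain ⟨m, B, rfl⟩ : ∃ (m : ℕ) (B : Matrix (Fin m) (Fin n) ℝ), M = B.conjTranspose * B := by
    obtain ⟨m, v, hv⟩ := Matrix.posSemidef_iff_eq_sum_vecMulVec.mp hM
    refine ⟨m, Matrix.of fun a i => v a i, ?_⟩
    rw [hv]; ext i j
    simp [Matrix.mul_apply, Matrix.vecMulVec_apply, Matrix.sum_apply]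
  have : ∑ i, ∑ j, c i * c j * ((B.conjTranspose * B) i j * N i j)
      = ∑ a, ∑ i, ∑ j, (c i * B a i) * (c j * B a j) * N i j := by
    have hpt : ∀ i j, c i * c j * ((B.conjTranspose * B) i j * N i j)
        = ∑ a, (c i * B a i) * (c j * B a j) * N i j := by
      intro i j
      simp only [Matrix.mul_apply, Matrix.conjTranspose_apply, RCLike.star_def,
        starRingEnd_apply, star_trivial, Finset.sum_mul, Finset.mul_sum]
      exact Finset.sum_congr rfl fun a _ => by ring
    simp_rw [hpt]
    calc ∑ i, ∑ j, ∑ a, (c i * B a i) * (c j * B a j) * N i j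
        = ∑ i, ∑ a, ∑ j, (c i * B a i) * (c j * B a j) * N i j :=
          Finset.sum_congr rfl fun i _ => Finset.sum_comm
      _ = ∑ a, ∑ i, ∑ j, (c i * B a i) * (c j * B a j) * N i j :=
          Finset.sum_comm
  rw [this]
  exact Finset.sum_nonneg fun a _ => hN fun i => c i * B a i

lemma psd_matrix {X : Type*} (k : X → X → ℝ) (hk : IsPSDKernel k)
    {n : ℕ} (x : Fin n → X) :
    (Matrix.of fun i j => k (x i) (x j)).PosSemidef := by
  rw [Matrix.posSemidef_iff_dotProduct_mulVec]
  constructor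
  · ext i j
    simp [Matrix.conjTranspose_apply, hk.1 (x i) (x j)]
  · intro c
    have := hk.2 n x c
    simpa [dotProduct, Matrix.mulVec, Finset.mul_sum, mul_comm,
      mul_assoc, mul_left_comm] using this

lemma pow_quadform_nonneg {X : Type*} (k : X → X → ℝ) (hk : IsPSDKernel k)
    (m : ℕ) {n : ℕ} (x : Fin n → X) (c : Fin n → ℝ) :
    0 ≤ ∑ i, ∑ j, c i * c j * (k (x i) (x j)) ^ m := by
  induction m generalizing c with
  | zero =>
    have : (∑ i, c i) ^ 2 = ∑ i, ∑ j, c i * c j * (k (x i) (x j)) ^ 0 := by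
      rw [sq, Finset.sum_mul_sum]; simp
    rw [← this]; positivity
  | succ m ih =>
    have h := schur_quadform (Matrix.of fun i j => k (x i) (x j))
      (Matrix.of fun i j => (k (x i) (x j)) ^ m)
      (psd_matrix k hk x) (fun c' => by simpa using ih c') c
    have : ∀ i j : Fin n, k (x i) (x j) * (k (x i) (x j)) ^ m
        = (k (x i) (x j)) ^ (m + 1) := fun i j => (pow_succ' _ _).symm
    simpa [this] using h

lemma real_exp_tsum (t : ℝ) : Real.exp t = ∑' m : ℕ, t ^ m / (m.factorial : ℝ) := by
  rw [Real.exp_eq_exp_ℝ, NormedSpace.exp_eq_tsum ℝ]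
  simp [div_eq_inv_mul, smul_eq_mul]

theorem exp_of_psd_kernel_is_psd {X : Type*} (k : X → X → ℝ)
    (hk : IsPSDKernel k) :
    IsPSDKernel (fun x y => Real.exp (k x y)) := by
  constructor
  · intro x y
    simp [hk.1 x y]
  · intro n x c
    have hsum : ∀ i j : Fin n,
        Summable (fun m : ℕ => c i * c j * ((k (x i) (x j)) ^ m / (m.factorial : ℝ))) :=
      fun i j => (Real.summable_pow_div_factorial (k (x i) (x j))).mul_left _
    have key : ∑ i, ∑ j, c i * c j * Real.exp (k (x i) (x j))
        = ∑' m : ℕ, ∑ i, ∑ j, c i * c j * ((k (x i) (x j)) ^ m / (m.factorial : ℝ)) := by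
      rw [Summable.tsum_finsetSum (fun i _ => summable_sum fun j _ => hsum i j)]
      refine Finset.sum_congr rfl fun i _ => ?_
      rw [Summable.tsum_finsetSum (fun j _ => hsum i j)]
      refine Finset.sum_congr rfl fun j _ => ?_
      rw [real_exp_tsum, tsum_mul_left]
    simp only at key ⊢
    rw [key]
    refine tsum_nonneg fun m => ?_
    have : ∑ i, ∑ j, c i * c j * ((k (x i) (x j)) ^ m / (m.factorial : ℝ))
        = (∑ i, ∑ j, c i * c j * (k (x i) (x j)) ^ m) / (m.factorial : ℝ) := by
      rw [Finset.sum_div]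
      refine Finset.sum_congr rfl fun i _ => ?_
      rw [Finset.sum_div]
      refine Finset.sum_congr rfl fun j _ => ?_
      ring
    rw [this]
    exact div_nonneg (pow_quadform_nonneg k hk m x c) (by positivity)
end

section
/- With the Kronecker delta kernel on Z as above, the CCL-K weighted estimate ∑_j W_{ji} e^{f(x_i, y_j)} with W = (K_Z + λI)⁻¹K_Z equals (n_k/(n_k + λ)) times the empirical average of e^{f(x_i, y_j)} over all j with z_j = z_i (where n_k is the number of such j); hence as λ → 0⁺ it recovers exactly the within-group average used by explicit conditional sampling. -/
open Finset Filter Topology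

private lemma cclk_inv_mul {b m : ℕ} (z : Fin b → Fin m)
    (hn : ∀ k : Fin m, 1 ≤ (Finset.univ.filter fun j => z j = k).card)
    (K : Matrix (Fin b) (Fin b) ℝ)
    (hK : ∀ i j, K i j = if z i = z j then 1 else 0)
    (l : ℝ) (hl : 0 < l) (p q : Fin b) :
    ((K + l • (1 : Matrix (Fin b) (Fin b) ℝ))⁻¹ * K) p q
      = if z p = z q then
          1 / (((Finset.univ.filter fun j => z j = z q).card : ℝ) + l) else 0 := by
  classical
  set n : Fin m → ℝ := fun k => ((Finset.univ.filter fun j => z j = k).card : ℝ) with hn_def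
  have hn1 : ∀ k, (1:ℝ) ≤ n k := fun k => by
    simp only [hn_def]; exact_mod_cast hn k
  have hnl : ∀ k, n k + l ≠ 0 := fun k => by nlinarith [hn1 k]
  have hl0 : l ≠ 0 := ne_of_gt hl
  set A : Matrix (Fin b) (Fin b) ℝ := K + l • 1 with hA
  have hApq : ∀ s t, A s t
      = (if z s = z t then (1:ℝ) else 0) + l * (if s = t then 1 else 0) := by
    intro s t
    simp [hA, hK, Matrix.one_apply, Matrix.add_apply, Matrix.smul_apply, mul_ite]
  have hAsymm : ∀ s t, A s t = A t s := by
    intro s t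
    rw [hApq, hApq]
    congr 1
    · exact if_congr eq_comm rfl rfl
    · exact congrArg (l * ·) (if_congr eq_comm rfl rfl)
  set B : Matrix (Fin b) (Fin b) ℝ :=
    Matrix.of (fun s u => (1/l) * ((if s = u then (1:ℝ) else 0)
      - (if z u = z s then 1 else 0) / (n (z s) + l))) with hB
  set W : Matrix (Fin b) (Fin b) ℝ :=
    Matrix.of (fun u t => if z u = z t then 1 / (n (z t) + l) else 0) with hW
  -- sum helpers
  have hdel : ∀ (g : Fin b → ℝ) (s : Fin b),
      ∑ t, (if s = t then (1:ℝ) else 0) * g t = g s := by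
    intro g s; simp
  have hgrp : ∀ (g : Fin b → ℝ) (k : Fin m),
      ∑ t, (if z t = k then (1:ℝ) else 0) * g t
        = ∑ t ∈ Finset.univ.filter (fun t => z t = k), g t := by
    intro g k
    rw [Finset.sum_filter]
    simp [ite_mul]
  have e2 : ∀ (s : Fin b) (k : Fin m),
      ∑ u, (if z u = k then (1:ℝ) else 0) * A s u
        = (if z s = k then 1 else 0) * (n k + l) := by
    intro s k
    rw [hgrp]
    have h1 : ∑ u ∈ Finset.univ.filter (fun u => z u = k), A s u
        = ∑ u ∈ Finset.univ.filter (fun u => z u = k),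
            ((if z s = k then (1:ℝ) else 0) + l * (if u = s then 1 else 0)) := by
      refine Finset.sum_congr rfl ?_
      intro u hu
      rw [Finset.mem_filter] at hu
      by_cases hsu : s = u
      · subst hsu; simp [hApq, hu.2]
      · simp [hApq, hu.2, hsu, Ne.symm hsu]
    rw [h1, Finset.sum_add_distrib, Finset.sum_const, ← Finset.mul_sum,
      Finset.sum_ite_eq' (Finset.univ.filter (fun u => z u = k)) s (fun _ => (1:ℝ))]
    simp only [Finset.mem_filter, Finset.mem_univ, true_and, nsmul_eq_mul]
    by_cases h : z s = k
    · simp only [if_pos h, hn_def]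
      ring
    · simp [h]
  have hBA : B * A = 1 := by
    ext s t
    rw [Matrix.mul_apply]
    have hterm : ∀ u, B s u * A u t
        = (1/l) * ((if s = u then (1:ℝ) else 0) * A u t)
          - ((1/l) / (n (z s) + l)) * ((if z u = z s then (1:ℝ) else 0) * A u t) := by
      intro u
      simp only [hB, Matrix.of_apply]
      ring
    rw [Finset.sum_congr rfl (fun u _ => hterm u), Finset.sum_sub_distrib,
      ← Finset.mul_sum, ← Finset.mul_sum, hdel]
    have h2 : ∑ u, (if z u = z s then (1:ℝ) else 0) * A u t
        = (if z t = z s then 1 else 0) * (n (z s) + l) := by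
      rw [Finset.sum_congr rfl (fun u _ => by rw [hAsymm u t]), e2]
    rw [h2, hApq, Matrix.one_apply]
    by_cases h : s = t
    · subst h
      simp only [if_pos rfl]
      field_simp
      have h5 : (l + n (z s))⁻¹ * (l + n (z s)) = 1 := inv_mul_cancel₀ (by rw [add_comm]; exact hnl (z s))
      linear_combination (-1 : ℝ) * h5
    · simp only [if_neg h, if_neg (Ne.symm h)]
      by_cases hz : z s = z t
      · rw [if_pos hz, if_pos hz.symm]
        field_simp
        rw [div_self (hnl (z s))]; ring
      · rw [if_neg hz, if_neg (fun hh => hz hh.symm)]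
        simp
  have hAW : A * W = K := by
    ext s t
    rw [Matrix.mul_apply]
    have hterm : ∀ u, A s u * W u t
        = (if z u = z t then (1:ℝ) else 0) * (A s u * (1 / (n (z t) + l))) := by
      intro u
      simp only [hW, Matrix.of_apply]
      by_cases h : z u = z t <;> simp [h]
    rw [Finset.sum_congr rfl (fun u _ => hterm u)]
    have : ∑ u, (if z u = z t then (1:ℝ) else 0) * (A s u * (1 / (n (z t) + l)))
        = (∑ u, (if z u = z t then (1:ℝ) else 0) * A s u) * (1 / (n (z t) + l)) := by
      rw [Finset.sum_mul]
      refine Finset.sum_congr rfl fun u _ => by ring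
    rw [this, e2, hK]
    by_cases h : z s = z t
    · rw [if_pos h]
      field_simp
      exact div_self (hnl (z t))
    · rw [if_neg h]
      ring
  have hAinv : A⁻¹ = B := Matrix.inv_eq_left_inv hBA
  have hfin : A⁻¹ * K = W := by
    rw [hAinv, ← hAW, ← Matrix.mul_assoc, hBA, Matrix.one_mul]
  calc ((K + l • (1 : Matrix (Fin b) (Fin b) ℝ))⁻¹ * K) p q
      = (A⁻¹ * K) p q := by rw [hA]
    _ = W p q := by rw [hfin]
    _ = _ := by simp [hW, hn_def]

theorem cclk_delta_kernel_recovers_group_average {b m : ℕ}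
    (z : Fin b → Fin m) (f : Fin b → Fin b → ℝ)
    (hn : ∀ k : Fin m, 1 ≤ (Finset.univ.filter fun j => z j = k).card)
    (K : Matrix (Fin b) (Fin b) ℝ)
    (hK : ∀ i j, K i j = if z i = z j then 1 else 0) :
    ∀ i : Fin b,
      (∀ l : ℝ, 0 < l →
        ∑ j, ((K + l • (1 : Matrix (Fin b) (Fin b) ℝ))⁻¹ * K) j i *
            Real.exp (f i j) =
          (((Finset.univ.filter fun j => z j = z i).card : ℝ) /
              (((Finset.univ.filter fun j => z j = z i).card : ℝ) + l)) *
            ((1 / ((Finset.univ.filter fun j => z j = z i).card : ℝ)) *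
              ∑ j ∈ Finset.univ.filter fun j => z j = z i, Real.exp (f i j))) ∧
      Tendsto
        (fun l : ℝ =>
          ∑ j, ((K + l • (1 : Matrix (Fin b) (Fin b) ℝ))⁻¹ * K) j i *
            Real.exp (f i j))
        (𝓝[>] 0)
        (𝓝 ((1 / ((Finset.univ.filter fun j => z j = z i).card : ℝ)) *
          ∑ j ∈ Finset.univ.filter fun j => z j = z i, Real.exp (f i j))) := by
  intro i
  classical
  set nc : ℝ := ((Finset.univ.filter fun j => z j = z i).card : ℝ) with hnc
  set S : ℝ := ∑ j ∈ Finset.univ.filter fun j => z j = z i, Real.exp (f i j) with hS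
  have hnc1 : (1:ℝ) ≤ nc := by
    simp only [hnc]; exact_mod_cast hn (z i)
  have hnc0 : nc ≠ 0 := by linarith
  have part1 : ∀ l : ℝ, 0 < l →
      ∑ j, ((K + l • (1 : Matrix (Fin b) (Fin b) ℝ))⁻¹ * K) j i *
          Real.exp (f i j) = (nc / (nc + l)) * ((1 / nc) * S) := by
    intro l hl
    have hnl : nc + l ≠ 0 := by linarith
    have hsum : ∑ j, ((K + l • (1 : Matrix (Fin b) (Fin b) ℝ))⁻¹ * K) j i *
        Real.exp (f i j)
        = ∑ j, (if z j = z i then 1 / (nc + l) else 0) * Real.exp (f i j) := by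
      refine Finset.sum_congr rfl fun j _ => ?_
      rw [cclk_inv_mul z hn K hK l hl j i, hnc]
    rw [hsum]
    have : ∑ j, (if z j = z i then 1 / (nc + l) else 0) * Real.exp (f i j)
        = ∑ j ∈ Finset.univ.filter fun j => z j = z i,
            (1 / (nc + l)) * Real.exp (f i j) := by
      rw [Finset.sum_filter]
      exact Finset.sum_congr rfl fun j _ => by by_cases h : z j = z i <;> simp [h]
    rw [this, ← Finset.mul_sum, ← hS]
    field_simp
  refine ⟨part1, ?_⟩
  have hev : (fun l : ℝ =>
      ∑ j, ((K + l • (1 : Matrix (Fin b) (Fin b) ℝ))⁻¹ * K) j i *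
        Real.exp (f i j)) =ᶠ[𝓝[>] (0:ℝ)]
      (fun l : ℝ => (nc / (nc + l)) * ((1 / nc) * S)) := by
    filter_upwards [self_mem_nhdsWithin] with l hl
    exact part1 l hl
  have h1 : Tendsto (fun l : ℝ => nc + l) (𝓝 0) (𝓝 nc) := by
    simpa using (tendsto_const_nhds (x := nc)).add (tendsto_id (x := 𝓝 (0:ℝ)))
  have h2 : Tendsto (fun l : ℝ => nc / (nc + l)) (𝓝 0) (𝓝 1) := by
    have := (tendsto_const_nhds (x := nc)).div h1 hnc0
    rw [div_self hnc0] at this; exact this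
  have h3 : Tendsto (fun l : ℝ => (nc / (nc + l)) * ((1 / nc) * S)) (𝓝 0)
      (𝓝 ((1 / nc) * S)) := by
    simpa using h2.mul (tendsto_const_nhds (x := (1 / nc) * S))
  exact Tendsto.congr' hev.symm (h3.mono_left nhdsWithin_le_nhds)
end
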